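/- Let D be a finite DAG with vertices partitioned into sources S, internal vertices I, and sinks T. If the internal vertices are eliminated in a forward topological order (each vertex eliminated only after all of its predecessors in I), then the total cost incurred is at most |S| · |E(D)|. Symmetrically, eliminating in reverse topological order incurs cost at most |T| · |E(D)|. -/

import Mathlib

variable {V : Type*} [DecidableEq V] [Fintype V]

/-- In-neighborhood of `v` in the edge set `E`. -/
def inN (E : Finset (V × V)) (v : V) : Finset V :=
  (E.filter fun p => p.2 = v).image Prod.fst

/-- Out-neighborhood of `v` in the edge set `E`. -/
def outN (E : Finset (V × V)) (v : V) : Finset V :=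
  (E.filter fun p => p.1 = v).image Prod.snd

/-- Elimination of vertex `v`: delete `v` and add an edge from every in-neighbor
to every out-neighbor of `v` (if not already present). -/
def elimv (E : Finset (V × V)) (v : V) : Finset (V × V) :=
  (E ∪ (inN E v) ×ˢ (outN E v)).filter fun p => p.1 ≠ v ∧ p.2 ≠ v

/-- Eliminate a sequence of vertices, in order. -/
def elimSeq (E : Finset (V × V)) (σ : List V) : Finset (V × V) :=
  σ.foldl elimv E

/-- Markowitz degree of `v`: in-degree times out-degree. -/
def mark (E : Finset (V × V)) (v : V) : ℕ :=
  (inN E v).card * (outN E v).card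

/-- Cost of an elimination sequence: sum of the Markowitz degrees at the
time of each elimination. -/
def cost (E : Finset (V × V)) : List V → ℕ
  | [] => 0
  | v :: σ => mark E v + cost (elimv E v) σ

/-- The directed graph with edge set `E` is acyclic. -/
def Acyclic (E : Finset (V × V)) : Prop :=
  ∀ v : V, ¬ Relation.TransGen (fun a b => (a, b) ∈ E) v v

/-- `E` is an acyclic digraph whose vertices are partitioned into sources `S`
(no in-edges), internal vertices `I`, and sinks `T` (no out-edges). -/
def IsDAGPartition (E : Finset (V × V)) (S I T : Finset V) : Prop :=
  Acyclic E ∧ Disjoint S I ∧ Disjoint S T ∧ Disjoint I T ∧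
    S ∪ I ∪ T = Finset.univ ∧ (∀ s ∈ S, inN E s = ∅) ∧ (∀ t ∈ T, outN E t = ∅)

/-- There is a directed path from `i` to `j` all of whose internal vertices
lie in `X` (the single-edge path has no internal vertices). -/
def PathThrough (E : Finset (V × V)) (X : Finset V) (i j : V) : Prop :=
  ∃ l : List V, (∀ v ∈ l, v ∈ X) ∧ List.Chain' (fun a b => (a, b) ∈ E) (i :: (l ++ [j]))

set_option linter.unusedSectionVars false

lemma mem_inN {E : Finset (V × V)} {a v : V} : a ∈ inN E v ↔ (a, v) ∈ E := by
  simp only [inN, Finset.mem_image, Finset.mem_filter]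
  constructor
  · rintro ⟨⟨x, y⟩, ⟨h, rfl⟩, rfl⟩; exact h
  · exact fun h => ⟨(a, v), ⟨h, rfl⟩, rfl⟩

lemma mem_outN {E : Finset (V × V)} {b v : V} : b ∈ outN E v ↔ (v, b) ∈ E := by
  simp only [outN, Finset.mem_image, Finset.mem_filter]
  constructor
  · rintro ⟨⟨x, y⟩, ⟨h, rfl⟩, rfl⟩; exact h
  · exact fun h => ⟨(v, b), ⟨h, rfl⟩, rfl⟩

lemma mem_elimv {E : Finset (V × V)} {v : V} {p : V × V} :
    p ∈ elimv E v ↔ (p ∈ E ∨ ((p.1, v) ∈ E ∧ (v, p.2) ∈ E)) ∧ p.1 ≠ v ∧ p.2 ≠ v := by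
  simp [elimv, Finset.mem_filter, Finset.mem_union, Finset.mem_product, mem_inN, mem_outN]

def sw (E : Finset (V × V)) : Finset (V × V) :=
  E.map ⟨Prod.swap, Prod.swap_injective⟩

lemma mem_sw {E : Finset (V × V)} {p : V × V} : p ∈ sw E ↔ (p.2, p.1) ∈ E := by
  constructor
  · rintro h
    rcases Finset.mem_map.mp h with ⟨q, hq, rfl⟩
    simpa using hq
  · intro h
    exact Finset.mem_map.mpr ⟨(p.2, p.1), h, rfl⟩

lemma inN_sw {E : Finset (V × V)} {v : V} : inN (sw E) v = outN E v := by
  ext a; simp [mem_inN, mem_outN, mem_sw]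

lemma outN_sw {E : Finset (V × V)} {v : V} : outN (sw E) v = inN E v := by
  ext a; simp [mem_inN, mem_outN, mem_sw]

lemma elimv_sw {E : Finset (V × V)} {v : V} : elimv (sw E) v = sw (elimv E v) := by
  ext ⟨a, b⟩
  simp only [mem_elimv, mem_sw]
  tauto

lemma mark_sw {E : Finset (V × V)} {v : V} : mark (sw E) v = mark E v := by
  simp [mark, inN_sw, outN_sw, Nat.mul_comm]

lemma cost_sw {E : Finset (V × V)} : ∀ l : List V, cost (sw E) l = cost E l
  | [] => rfl
  | v :: l => by rw [cost, cost, mark_sw, elimv_sw, cost_sw]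

lemma card_sw {E : Finset (V × V)} : (sw E).card = E.card := Finset.card_map _

lemma pathThrough_mono {E : Finset (V × V)} {X Y : Finset V} {a b : V} (hXY : X ⊆ Y)
    (h : PathThrough E X a b) : PathThrough E Y a b := by
  obtain ⟨l, hl, hc⟩ := h
  exact ⟨l, fun v hv => hXY (hl v hv), hc⟩

lemma pathThrough_trans {E : Finset (V × V)} {X : Finset V} {a v b : V}
    (h1 : PathThrough E X a v) (h2 : PathThrough E X v b) :
    PathThrough E (insert v X) a b := by
  obtain ⟨l1, hl1, hc1⟩ := h1
  obtain ⟨l2, hl2, hc2⟩ := h2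
  refine ⟨l1 ++ v :: l2, ?_, ?_⟩
  · intro w hw
    rcases List.mem_append.mp hw with h | h
    · exact Finset.mem_insert_of_mem (hl1 w h)
    · rcases List.mem_cons.mp h with rfl | h
      · exact Finset.mem_insert_self _ _
      · exact Finset.mem_insert_of_mem (hl2 w h)
  · have e1 : a :: (l1 ++ [v]) = (a :: l1) ++ [v] := by simp
    rw [e1, List.Chain', List.isChain_append] at hc1
    obtain ⟨h1, _, h3⟩ := hc1
    have e2 : a :: ((l1 ++ v :: l2) ++ [b]) = (a :: l1) ++ (v :: (l2 ++ [b])) := by simp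
    rw [e2, List.Chain', List.isChain_append]
    refine ⟨h1, hc2, ?_⟩
    intro x hx y hy
    simp only [List.head?_cons, Option.mem_def, Option.some.injEq] at hy
    subst hy
    exact h3 x hx v (by simp)

lemma pathThrough_first {E : Finset (V × V)} {X : Finset V} {a b : V}
    (h : PathThrough E X a b) : ∃ x, (a, x) ∈ E := by
  obtain ⟨l, _, hc⟩ := h
  cases l with
  | nil => exact ⟨b, (List.isChain_cons_cons.mp hc).1⟩
  | cons w l => exact ⟨w, (List.isChain_cons_cons.mp hc).1⟩

lemma chain_index {E : Finset (V × V)} {I : Finset V} {σ : List V}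
    (hfwd : ∀ a b : V, (a, b) ∈ E → a ∈ I → b ∈ I → σ.idxOf a < σ.idxOf b) :
    ∀ (l : List V) (a b : V), (∀ w ∈ l, w ∈ I) → a ∈ I → b ∈ I →
      List.Chain' (fun x y => (x, y) ∈ E) (a :: (l ++ [b])) →
      σ.idxOf a < σ.idxOf b
  | [], a, b, _, ha, hb, hc => hfwd a b (List.isChain_cons_cons.mp hc).1 ha hb
  | w :: l, a, b, hl, ha, hb, hc => by
    have hwI : w ∈ I := hl w (by simp)
    have h1 := List.isChain_cons_cons.mp hc
    exact lt_trans (hfwd a w h1.1 ha hwI)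
      (chain_index hfwd l w b (fun x hx => hl x (by simp [hx])) hwI hb h1.2)

def ElimInv (E E' : Finset (V × V)) (X : Finset V) : Prop :=
  ∀ p ∈ E', p.1 ∉ X ∧ p.2 ∉ X ∧ PathThrough E X p.1 p.2

lemma elimInv_init {E : Finset (V × V)} : ElimInv E E ∅ := by
  intro p hp
  refine ⟨by simp, by simp, ⟨[], by simp, ?_⟩⟩
  simpa [List.Chain', List.isChain_cons_cons] using hp

lemma elimInv_step {E E' : Finset (V × V)} {X : Finset V} {v : V}
    (hI : ElimInv E E' X) : ElimInv E (elimv E' v) (insert v X) := by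
  intro p hp
  obtain ⟨hmem, h1, h2⟩ := mem_elimv.mp hp
  rcases hmem with hp' | ⟨hav, hvb⟩
  · obtain ⟨ha, hb, hpath⟩ := hI p hp'
    exact ⟨by simp [Finset.mem_insert, h1, ha],
      by simp [Finset.mem_insert, h2, hb],
      pathThrough_mono (Finset.subset_insert _ _) hpath⟩
  · obtain ⟨ha, _, hpath1⟩ := hI _ hav
    obtain ⟨_, hb, hpath2⟩ := hI _ hvb
    exact ⟨by simp [Finset.mem_insert, h1, ha],
      by simp [Finset.mem_insert, h2, hb],
      pathThrough_trans hpath1 hpath2⟩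

lemma main_bound (E : Finset (V × V)) (S I T : Finset V)
    (hSI : Disjoint S I) (hcov : S ∪ I ∪ T = Finset.univ)
    (hT : ∀ t ∈ T, outN E t = ∅)
    (σf : List V) (hσ : σf.Nodup) (hσI : σf.toFinset = I)
    (hfwd : ∀ a b : V, (a, b) ∈ E → a ∈ I → b ∈ I → σf.idxOf a < σf.idxOf b) :
    ∀ (rest ρ : List V), σf = ρ ++ rest →
      ElimInv E (elimSeq E ρ) ρ.toFinset →
      cost (elimSeq E ρ) rest ≤ S.card * ((elimSeq E ρ).filter fun p => p.1 ∉ S).card := by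
  intro rest
  induction rest with
  | nil => intro ρ _ _; simp [cost]
  | cons v rest ih =>
    intro ρ heq hInv
    set E' := elimSeq E ρ with hE'
    have hvσ : v ∈ σf := by rw [heq]; simp
    have hvI : v ∈ I := hσI ▸ List.mem_toFinset.mpr hvσ
    have hdisj : List.Disjoint ρ (v :: rest) := by
      have := heq ▸ hσ
      exact (List.nodup_append'.mp this).2.2
    have hvnρ : v ∉ ρ := fun h => hdisj h (List.mem_cons_self (a := v) (l := rest))
    have hρI : ∀ w ∈ ρ, w ∈ I := fun w hw =>
      hσI ▸ List.mem_toFinset.mpr (heq ▸ List.mem_append_left _ hw)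
    -- in-neighbors of v in E' are all sources
    have hinS : inN E' v ⊆ S := by
      intro a ha
      have haE' : (a, v) ∈ E' := mem_inN.mp ha
      obtain ⟨haX, _, hpath⟩ := hInv _ haE'
      by_contra haS
      have haIT : a ∈ I ∨ a ∈ T := by
        have hu : a ∈ S ∪ I ∪ T := hcov ▸ Finset.mem_univ a
        simp only [Finset.mem_union] at hu
        tauto
      rcases haIT with haI | haT
      · obtain ⟨l, hl, hc⟩ := hpath
        have hidx : σf.idxOf a < σf.idxOf v :=
          chain_index hfwd l a v (fun w hw => hρI w (List.mem_toFinset.mp (hl w hw))) haI hvI hc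
        have h1 : σf.idxOf v = ρ.length := by
          rw [heq, List.idxOf_append_of_notMem hvnρ]
          simp
        have haρ' : a ∉ ρ := fun h => haX (List.mem_toFinset.mpr h)
        have h2 : ρ.length ≤ σf.idxOf a := by
          rw [heq, List.idxOf_append_of_notMem haρ']
          exact Nat.le_add_right _ _
        omega
      · obtain ⟨x, hx⟩ := pathThrough_first hpath
        have hxo : x ∈ outN E a := mem_outN.mpr hx
        rw [hT a haT] at hxo
        exact absurd hxo (Finset.notMem_empty x)
    have hvS : v ∉ S := fun h => (Finset.disjoint_left.mp hSI) h hvI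
    -- potential accounting
    set A := E'.filter (fun p => p.1 ∉ S) with hA
    set B := E'.filter (fun p => p.1 = v) with hB
    have hcardB : (outN E' v).card = B.card := by
      rw [outN, ← hB]
      apply Finset.card_image_of_injOn
      intro p hp q hq hpq
      have hp1 := (Finset.mem_filter.mp hp).2
      have hq1 := (Finset.mem_filter.mp hq).2
      exact Prod.ext (hp1.trans hq1.symm) hpq
    have hBsubA : B ⊆ A := by
      intro p hp
      obtain ⟨hpE, hp1⟩ := Finset.mem_filter.mp hp
      exact Finset.mem_filter.mpr ⟨hpE, hp1 ▸ hvS⟩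
    have hsub : (elimv E' v).filter (fun p => p.1 ∉ S) ⊆ A \ B := by
      intro p hp
      obtain ⟨hpe, hp1⟩ := Finset.mem_filter.mp hp
      obtain ⟨hmem, h1, _⟩ := mem_elimv.mp hpe
      rcases hmem with hpE | ⟨hav, _⟩
      · refine Finset.mem_sdiff.mpr ⟨Finset.mem_filter.mpr ⟨hpE, hp1⟩, ?_⟩
        intro hpB
        exact h1 (Finset.mem_filter.mp hpB).2
      · exact absurd (hinS (mem_inN.mpr hav)) hp1
    have key : ((elimv E' v).filter (fun p => p.1 ∉ S)).card + (outN E' v).card ≤ A.card := by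
      rw [hcardB]
      calc ((elimv E' v).filter (fun p => p.1 ∉ S)).card + B.card
          ≤ (A \ B).card + B.card := Nat.add_le_add_right (Finset.card_le_card hsub) _
        _ = A.card := Finset.card_sdiff_add_card_eq_card hBsubA
    have hmark : mark E' v ≤ S.card * (outN E' v).card :=
      Nat.mul_le_mul_right _ (Finset.card_le_card hinS)
    -- apply IH
    have hseq : elimSeq E (ρ ++ [v]) = elimv E' v := by
      rw [elimSeq, List.foldl_append]
      rfl
    have htfs : (ρ ++ [v]).toFinset = insert v ρ.toFinset := by
      ext x; simp [or_comm]
    have hInv' : ElimInv E (elimSeq E (ρ ++ [v])) (ρ ++ [v]).toFinset := by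
      rw [hseq, htfs]
      exact elimInv_step hInv
    have hIH := ih (ρ ++ [v]) (by simp [heq]) hInv'
    rw [hseq] at hIH
    calc cost E' (v :: rest)
        = mark E' v + cost (elimv E' v) rest := rfl
      _ ≤ S.card * (outN E' v).card
            + S.card * ((elimv E' v).filter (fun p => p.1 ∉ S)).card :=
          Nat.add_le_add hmark hIH
      _ = S.card * (((elimv E' v).filter (fun p => p.1 ∉ S)).card + (outN E' v).card) := by
          ring
      _ ≤ S.card * A.card := Nat.mul_le_mul_left _ key

/-- eliminating in forward topological order costs at most
`|S|·|E|`; eliminating in reverse topological order costs at most `|T|·|E|`. -/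
theorem cost_topo_order (E : Finset (V × V)) (S I T : Finset V)
    (hD : IsDAGPartition E S I T)
    (σ τ : List V) (hσ : σ.Nodup) (hσI : σ.toFinset = I)
    (hτ : τ.Nodup) (hτI : τ.toFinset = I)
    (hfwd : ∀ a b : V, (a, b) ∈ E → a ∈ I → b ∈ I → σ.idxOf a < σ.idxOf b)
    (hrev : ∀ a b : V, (a, b) ∈ E → a ∈ I → b ∈ I → τ.idxOf b < τ.idxOf a) :
    cost E σ ≤ S.card * E.card ∧ cost E τ ≤ T.card * E.card := by
  obtain ⟨hAc, hSI, hST, hIT, hcov, hS, hT⟩ := hD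
  constructor
  · have h := main_bound E S I T hSI hcov hT σ hσ hσI hfwd σ [] (by simp)
      (by simpa [elimSeq] using (elimInv_init (E := E)))
    simp only [elimSeq, List.foldl_nil] at h
    calc cost E σ ≤ S.card * (E.filter fun p => p.1 ∉ S).card := h
      _ ≤ S.card * E.card := Nat.mul_le_mul_left _ (Finset.card_filter_le _ _)
  · have hcov' : T ∪ I ∪ S = Finset.univ := by
      rw [← hcov]; ext x; simp only [Finset.mem_union]; tauto
    have hT' : ∀ s ∈ S, outN (sw E) s = ∅ := fun s hs => by rw [outN_sw]; exact hS s hs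
    have hfwd' : ∀ a b : V, (a, b) ∈ sw E → a ∈ I → b ∈ I →
        τ.idxOf a < τ.idxOf b := fun a b hab ha hb => hrev b a (mem_sw.mp hab) hb ha
    have h := main_bound (sw E) T I S hIT.symm hcov' hT' τ hτ hτI hfwd' τ [] (by simp)
      (by simpa [elimSeq] using (elimInv_init (E := sw E)))
    simp only [elimSeq, List.foldl_nil] at h
    rw [cost_sw] at h
    calc cost E τ ≤ T.card * ((sw E).filter fun p => p.1 ∉ T).card := h
      _ ≤ T.card * (sw E).card := Nat.mul_le_mul_left _ (Finset.card_filter_le _ _)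
      _ = T.card * E.card := by rw [card_sw]
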